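/- Let U be an n×n unitary complex matrix with symmetric support (U i j ≠ 0 ↔ U j i ≠ 0), and let G be the simple graph with G.Adj i j ↔ (i ≠ j ∧ U i j ≠ 0). If G is connected and has at least 3 vertices, then between any two distinct vertices u and v there exist two independent paths: there are paths p and q from u to v in G such that every vertex lying on both p and q is equal to u or to v. -/

import Mathlib

open SimpleGraph Walk

variable {V : Type*} [DecidableEq V] {G : SimpleGraph V}

/-- Appending two paths with supports meeting only at the junction gives a path. -/
lemma aux_append_path {u x v : V} {p : G.Walk u x} {q : G.Walk x v}
    (hp : p.IsPath) (hq : q.IsPath)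
    (hd : ∀ y, y ∈ p.support → y ∈ q.support → y = x) : (p.append q).IsPath := by
  rw [Walk.isPath_def, Walk.support_append]
  refine List.Nodup.append hp.support_nodup (hq.support_nodup.tail) ?_
  intro y hy hy'
  have hyx : y = x := hd y hy (List.mem_of_mem_tail hy')
  have hq' : q.support = x :: q.support.tail := q.support_eq_cons
  have hnd := hq.support_nodup
  rw [hq'] at hnd
  exact (List.nodup_cons.mp hnd).1 (hyx ▸ hy')

/-- In a path, a vertex in both the take and drop parts equals the split vertex. -/
lemma aux_take_drop {u v x y : V} {p : G.Walk u v} (hp : p.IsPath) (hx : x ∈ p.support)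
    (h1 : y ∈ (p.takeUntil x hx).support) (h2 : y ∈ (p.dropUntil x hx).support) : y = x := by
  by_contra hyx
  have hspec := p.take_spec hx
  have hnd : ((p.takeUntil x hx).append (p.dropUntil x hx)).IsPath := by rw [hspec]; exact hp
  rw [Walk.isPath_def, Walk.support_append] at hnd
  have h2' : y ∈ (p.dropUntil x hx).support.tail := by
    rw [(p.dropUntil x hx).support_eq_cons, List.mem_cons] at h2
    rcases h2 with hh | hh
    · exact absurd hh hyx
    · exact hh
  exact (List.disjoint_of_nodup_append hnd) h1 h2'

/-- First vertex of a walk lying in a set `S`. -/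
lemma aux_first (S : V → Prop) : ∀ {a b : V} (R : G.Walk a b), ¬ S a → S b →
    ∃ x, S x ∧ ∃ R' : G.Walk a x, (∀ y, y ∈ R'.support → y ∈ R.support) ∧
      (∀ y, y ∈ R'.support → S y → y = x) := by
  intro a b R
  induction R with
  | nil => intro ha hb; exact absurd hb ha
  | @cons a c b h q ih =>
    intro ha hb
    by_cases hc : S c
    · refine ⟨c, hc, Walk.cons h Walk.nil, ?_, ?_⟩
      · intro y hy; simp at hy; rcases hy with h | h <;> simp [h]
      · intro y hy hSy; simp at hy; rcases hy with h | h
        · exact absurd (h ▸ hSy) ha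
        · exact h
    · obtain ⟨x, hSx, R', hsub, hfirst⟩ := ih hc hb
      refine ⟨x, hSx, Walk.cons h R', ?_, ?_⟩
      · intro y hy
        rw [Walk.support_cons, List.mem_cons] at hy ⊢
        rcases hy with hh | hy
        · exact Or.inl hh
        · exact Or.inr (hsub y hy)
      · intro y hy hSy
        rw [Walk.support_cons, List.mem_cons] at hy
        rcases hy with hh | hy
        · exact absurd (hh ▸ hSy) ha
        · exact hfirst y hy hSy

/-- Case: `u` lies on `P1`. -/
lemma aux_caseA {u v w : V} (huv : u ≠ v) (hwu : w ≠ u) (hwv : w ≠ v)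
    (hadj : G.Adj u w) (P1 P2 : G.Walk w v) (h1 : P1.IsPath) (h2 : P2.IsPath)
    (hind : ∀ y, y ∈ P1.support → y ∈ P2.support → y = w ∨ y = v)
    (hu1 : u ∈ P1.support) :
    ∃ p q : G.Walk u v, p.IsPath ∧ q.IsPath ∧
      ∀ y : V, y ∈ p.support → y ∈ q.support → y = u ∨ y = v := by
  have hu2 : u ∉ P2.support := by
    intro hu2
    rcases hind u hu1 hu2 with h | h
    · exact hwu h.symm
    · exact huv h
  refine ⟨P1.dropUntil u hu1, Walk.cons hadj P2, h1.dropUntil hu1,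
    (Walk.cons_isPath_iff _ _).mpr ⟨h2, hu2⟩, ?_⟩
  intro y hyA hyB
  rw [Walk.support_cons, List.mem_cons] at hyB
  rcases hyB with h' | hyB
  · exact Or.inl h'
  · have hyP1 : y ∈ P1.support := P1.support_dropUntil_subset hu1 hyA
    rcases hind y hyP1 hyB with h' | h'
    · -- y = w : w in drop part and also take part (as start), so w = u, contra
      have hwt : w ∈ (P1.takeUntil u hu1).support := Walk.start_mem_support _
      exact absurd (aux_take_drop h1 hu1 hwt (h' ▸ hyA)) hwu
    · exact Or.inr h'

/-- Case: `u` on neither path; first-meeting vertex `x` lies on `P1`. -/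
lemma aux_caseB {u v w x : V} (huv : u ≠ v) (hwu : w ≠ u) (hwv : w ≠ v)
    (hadj : G.Adj u w) (P1 P2 : G.Walk w v) (h1 : P1.IsPath) (h2 : P2.IsPath)
    (hind : ∀ y, y ∈ P1.support → y ∈ P2.support → y = w ∨ y = v)
    (hu : ¬ (u ∈ P1.support ∨ u ∈ P2.support))
    (hx1 : x ∈ P1.support) (hxw : x ≠ w)
    (R : G.Walk u x) (hR : R.IsPath)
    (hRfirst : ∀ y, y ∈ R.support → (y ∈ P1.support ∨ y ∈ P2.support) → y = x) :
    ∃ p q : G.Walk u v, p.IsPath ∧ q.IsPath ∧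
      ∀ y : V, y ∈ p.support → y ∈ q.support → y = u ∨ y = v := by
  have hu2 : u ∉ P2.support := fun h => hu (Or.inr h)
  refine ⟨R.append (P1.dropUntil x hx1), Walk.cons hadj P2, ?_,
    (Walk.cons_isPath_iff _ _).mpr ⟨h2, hu2⟩, ?_⟩
  · refine aux_append_path hR (h1.dropUntil hx1) ?_
    intro y hy hy'
    exact hRfirst y hy (Or.inl (P1.support_dropUntil_subset hx1 hy'))
  · intro y hyA hyB
    rw [Walk.mem_support_append_iff] at hyA
    rw [Walk.support_cons, List.mem_cons] at hyB
    rcases hyB with h' | hyB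
    · exact Or.inl h'
    · rcases hyA with hyA | hyA
      · -- y on R and on P2 : y = x, then x on both P1 and P2, so x = v
        have hyx : y = x := hRfirst y hyA (Or.inr hyB)
        rcases hind x hx1 (hyx ▸ hyB) with h | h
        · exact absurd h hxw
        · exact Or.inr (hyx.trans h)
      · -- y on drop part of P1 and on P2 : y = w or y = v; y = w impossible
        have hyP1 : y ∈ P1.support := P1.support_dropUntil_subset hx1 hyA
        rcases hind y hyP1 hyB with h' | h'
        · have hwt : w ∈ (P1.takeUntil x hx1).support := Walk.start_mem_support _
          exact absurd (aux_take_drop h1 hx1 hwt (h' ▸ hyA)) (fun h => hxw h.symm)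
        · exact Or.inr h'

/-- Key induction: no cut vertex implies two independent paths. -/
lemma aux_twoPaths
    (hnocut : ∀ w a b : V, a ≠ w → b ≠ w → ∃ p : G.Walk a b, w ∉ p.support) :
    ∀ (k : ℕ) (u v : V), u ≠ v → ∀ P : G.Walk u v, P.IsPath → P.length ≤ k →
    ∃ p q : G.Walk u v, p.IsPath ∧ q.IsPath ∧
      ∀ y : V, y ∈ p.support → y ∈ q.support → y = u ∨ y = v := by
  intro k
  induction k with
  | zero =>
    intro u v huv P hP hlen
    cases P with
    | nil => exact absurd rfl huv
    | cons h q => simp at hlen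
  | succ k ih =>
    intro u v huv P hP hlen
    cases P with
    | nil => exact absurd rfl huv
    | @cons _ w _ h P' =>
      rw [Walk.cons_isPath_iff] at hP
      obtain ⟨hP', huP'⟩ := hP
      by_cases hwv : w = v
      · subst hwv
        refine ⟨Walk.cons h Walk.nil, Walk.cons h Walk.nil, ?_, ?_, ?_⟩
        · simp [Walk.cons_isPath_iff, h.ne]
        · simp [Walk.cons_isPath_iff, h.ne]
        · intro y hy _; simpa using hy
      · have hwu : w ≠ u := fun e => huP' (e ▸ Walk.start_mem_support P')
        have hlen' : P'.length ≤ k := by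
          simp only [Walk.length_cons] at hlen; omega
        obtain ⟨P1, P2, h1, h2, hind⟩ := ih w v hwv P' hP' hlen'
        by_cases hu1 : u ∈ P1.support
        · exact aux_caseA huv hwu hwv h P1 P2 h1 h2 hind hu1
        by_cases hu2 : u ∈ P2.support
        · refine aux_caseA huv hwu hwv h P2 P1 h2 h1 ?_ hu2
          intro y hy hy'; exact hind y hy' hy
        -- u not on P1 ∪ P2; take a path from u to v avoiding w
        obtain ⟨Q0, hQ0⟩ := hnocut w u v (Ne.symm hwu) (Ne.symm hwv)
        have hQw : w ∉ Q0.bypass.support := fun hh => hQ0 (Q0.support_bypass_subset hh)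
        have hSu : ¬ (u ∈ P1.support ∨ u ∈ P2.support) := by
          rintro (h' | h') <;> [exact hu1 h'; exact hu2 h']
        have hSv : v ∈ P1.support ∨ v ∈ P2.support := Or.inl (Walk.end_mem_support P1)
        obtain ⟨x, hSx, R', hsub, hfirst⟩ :=
          aux_first (fun y => y ∈ P1.support ∨ y ∈ P2.support) Q0.bypass hSu hSv
        have hxw : x ≠ w := by
          intro e
          exact hQw (e ▸ hsub x (Walk.end_mem_support R'))
        have hRfirst : ∀ y, y ∈ R'.bypass.support →
            (y ∈ P1.support ∨ y ∈ P2.support) → y = x :=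
          fun y hy hSy => hfirst y (R'.support_bypass_subset hy) hSy
        rcases hSx with hx1 | hx2
        · exact aux_caseB huv hwu hwv h P1 P2 h1 h2 hind hSu hx1 hxw
            R'.bypass R'.bypass_isPath hRfirst
        · refine aux_caseB huv hwu hwv h P2 P1 h2 h1 ?_ ?_ hx2 hxw
            R'.bypass R'.bypass_isPath ?_
          · intro y hy hy'; exact hind y hy' hy
          · rintro (h' | h') <;> [exact hu2 h'; exact hu1 h']
          · intro y hy hSy; exact hRfirst y hy hSy.symm

/-- From a path ending at `w`, extract a neighbor of `w` reachable from `a` avoiding `w`. -/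
lemma aux_nbr {a w : V} (haw : a ≠ w) (hr : G.Reachable a w) :
    ∃ i, G.Adj w i ∧ i ≠ w ∧ ∃ p : G.Walk a i, w ∉ p.support := by
  obtain ⟨p0⟩ := hr.symm
  obtain ⟨R, hR⟩ : ∃ R : G.Walk w a, R.IsPath := ⟨p0.bypass, p0.bypass_isPath⟩
  cases R with
  | nil => exact absurd rfl haw.symm
  | @cons _ c _ h q =>
    rw [Walk.cons_isPath_iff] at hR
    refine ⟨c, h, ?_, q.reverse, ?_⟩
    · intro e; exact hR.2 (e ▸ Walk.start_mem_support q)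
    · rw [Walk.support_reverse, List.mem_reverse]; exact hR.2

/-- In the graph of a unitary matrix, if the graph is connected and has at least 3
vertices, then between any two distinct vertices there are two independent paths. -/
theorem stmt_6 (n : ℕ) (U : Matrix (Fin n) (Fin n) ℂ)
    (hU : U ∈ Matrix.unitaryGroup (Fin n) ℂ)
    (hsym : ∀ i j, U i j ≠ 0 ↔ U j i ≠ 0)
    (G : SimpleGraph (Fin n)) (hG : ∀ i j, G.Adj i j ↔ i ≠ j ∧ U i j ≠ 0)
    (hconn : G.Connected) (hcard : 3 ≤ n) :
    ∀ u v : Fin n, u ≠ v →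
      ∃ p q : G.Walk u v, p.IsPath ∧ q.IsPath ∧
        ∀ w : Fin n, w ∈ p.support → w ∈ q.support → w = u ∨ w = v := by
  -- First: no cut vertex.
  have hnocut : ∀ w a b : Fin n, a ≠ w → b ≠ w → ∃ p : G.Walk a b, w ∉ p.support := by
    intro w a b haw hbw
    by_contra hcon
    push_neg at hcon
    -- components of G - w containing a and b
    set A : Fin n → Prop := fun x => x ≠ w ∧ ∃ p : G.Walk a x, w ∉ p.support with hA
    set B : Fin n → Prop := fun x => x ≠ w ∧ ∃ p : G.Walk b x, w ∉ p.support with hB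
    have hdisj : ∀ x, A x → B x → False := by
      rintro x ⟨_, p, hp⟩ ⟨_, q, hq⟩
      have : w ∉ (p.append q.reverse).support := by
        rw [Walk.mem_support_append_iff, Walk.support_reverse, List.mem_reverse]
        rintro (h' | h') <;> [exact hp h'; exact hq h']
      exact this (hcon (p.append q.reverse))
    have hAclosed : ∀ x y, A x → G.Adj x y → y ≠ w → A y := by
      rintro x y ⟨hxw, p, hp⟩ hxy hyw
      refine ⟨hyw, p.concat hxy, ?_⟩
      rw [Walk.support_concat, List.mem_append]
      rintro (h' | h')
      · exact hp h'
      · simp at h'; exact hyw h'.symm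
    have hBclosed : ∀ x y, B x → G.Adj x y → y ≠ w → B y := by
      rintro x y ⟨hxw, p, hp⟩ hxy hyw
      refine ⟨hyw, p.concat hxy, ?_⟩
      rw [Walk.support_concat, List.mem_append]
      rintro (h' | h')
      · exact hp h'
      · simp at h'; exact hyw h'.symm
    -- neighbors of w in A and B
    obtain ⟨i0, hi0adj, hi0w, pi0, hpi0⟩ := aux_nbr haw (hconn.preconnected a w)
    obtain ⟨j0, hj0adj, hj0w, pj0, hpj0⟩ := aux_nbr hbw (hconn.preconnected b w)
    have hi0A : A i0 := ⟨hi0w, pi0, hpi0⟩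
    have hj0B : B j0 := ⟨hj0w, pj0, hpj0⟩
    -- unitarity: columns i0 and j0 orthogonal, only w can contribute
    have hij : i0 ≠ j0 := fun e => hdisj i0 hi0A (e ▸ hj0B)
    have horth : ∑ k, star (U k i0) * U k j0 = 0 := by
      have h1 : star U * U = 1 := (Matrix.mem_unitaryGroup_iff'.mp hU)
      have := congrFun (congrFun h1 i0) j0
      rw [Matrix.mul_apply] at this
      simp only [Matrix.star_apply] at this
      rw [this]
      simp [Matrix.one_apply, hij]
    have hterm : ∀ k ∈ Finset.univ, k ≠ w → star (U k i0) * U k j0 = 0 := by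
      intro k _ hkw
      by_contra hne
      have hki : U k i0 ≠ 0 := by
        intro e; apply hne; rw [e]; simp
      have hkj : U k j0 ≠ 0 := by
        intro e; apply hne; rw [e]; simp
      have hkA : A k := by
        rcases eq_or_ne k i0 with rfl | hne'
        · exact hi0A
        · exact hAclosed i0 k hi0A ((hG i0 k).mpr ⟨Ne.symm hne', (hsym k i0).mp hki⟩) hkw
      have hkB : B k := by
        rcases eq_or_ne k j0 with rfl | hne'
        · exact hj0B
        · exact hBclosed j0 k hj0B ((hG j0 k).mpr ⟨Ne.symm hne', (hsym k j0).mp hkj⟩) hkw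
      exact hdisj k hkA hkB
    have hw : star (U w i0) * U w j0 = 0 := by
      rw [← Finset.sum_eq_single_of_mem w (Finset.mem_univ w) hterm]
      exact horth
    have hwi : U w i0 ≠ 0 := ((hG w i0).mp hi0adj).2
    have hwj : U w j0 ≠ 0 := ((hG w j0).mp hj0adj).2
    rcases mul_eq_zero.mp hw with h' | h'
    · exact hwi (by simpa using h')
    · exact hwj h'
  intro u v huv
  obtain ⟨p0⟩ := hconn.preconnected u v
  exact aux_twoPaths hnocut p0.bypass.length u v huv p0.bypass p0.bypass_isPath le_rfl
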